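/- If Alice's measurements are all compatible (jointly measurable), then the bipartite behavior p(ab|xy) = tr(M_{a|x} ⊗ N_{b|y} ρ) is Bell local, i.e., it admits a decomposition p(ab|xy) = Σ_λ p(λ) p_A(a|x,λ) p_B(b|y,λ) with probability distributions p(λ), p_A(·|x,λ), p_B(·|y,λ). -/

import Mathlib

open Matrix Kronecker
open scoped ComplexOrder

lemma kron_conjTranspose {m n : Type*} (A : Matrix m m ℂ) (B : Matrix n n ℂ) :
    (A ⊗ₖ B)ᴴ = Aᴴ ⊗ₖ Bᴴ := by
  ext ⟨i1,i2⟩ ⟨j1,j2⟩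
  simp [Matrix.conjTranspose_apply, mul_comm]

lemma psd_kron {m n : Type*} [Fintype m] [Fintype n] [DecidableEq m] [DecidableEq n]
    {A : Matrix m m ℂ} {B : Matrix n n ℂ}
    (hA : A.PosSemidef) (hB : B.PosSemidef) : (A ⊗ₖ B).PosSemidef := by
  obtain ⟨C, rfl⟩ : ∃ C : Matrix m m ℂ, A = Cᴴ * C := by
    open scoped MatrixOrder in exact CStarAlgebra.nonneg_iff_eq_star_mul_self.mp hA.nonneg
  obtain ⟨D, rfl⟩ : ∃ D : Matrix n n ℂ, B = Dᴴ * D := by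
    open scoped MatrixOrder in exact CStarAlgebra.nonneg_iff_eq_star_mul_self.mp hB.nonneg
  rw [Matrix.mul_kronecker_mul, ← kron_conjTranspose]
  exact Matrix.posSemidef_conjTranspose_mul_self _

lemma psd_trace_nonneg {m : Type*} [Fintype m] [DecidableEq m]
    {A : Matrix m m ℂ} (hA : A.PosSemidef) : 0 ≤ A.trace := by
  rw [Matrix.trace]
  apply Finset.sum_nonneg
  intro i _
  have := hA.diag_nonneg (i := i)
  simpa [dotProduct, Matrix.mulVec, Pi.single_apply, apply_ite] using this

lemma psd_trace_mul_nonneg {m : Type*} [Fintype m] [DecidableEq m]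
    {A ρ : Matrix m m ℂ} (hA : A.PosSemidef) (hρ : ρ.PosSemidef) :
    0 ≤ (A * ρ).trace := by
  obtain ⟨C, rfl⟩ : ∃ C : Matrix m m ℂ, A = Cᴴ * C := by
    open scoped MatrixOrder in exact CStarAlgebra.nonneg_iff_eq_star_mul_self.mp hA.nonneg
  rw [Matrix.mul_assoc, Matrix.trace_mul_comm]
  exact psd_trace_nonneg (hρ.mul_mul_conjTranspose_same C)

lemma kron_sum_right {m n : Type*} {ι : Type*} (s : Finset ι)
    (A : Matrix m m ℂ) (B : ι → Matrix n n ℂ) :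
    A ⊗ₖ (∑ b ∈ s, B b) = ∑ b ∈ s, A ⊗ₖ B b := by
  ext ⟨i1,i2⟩ ⟨j1,j2⟩
  simp [Matrix.sum_apply, Finset.mul_sum]

lemma kron_sum_left {m n : Type*} {ι : Type*} (s : Finset ι)
    (A : ι → Matrix m m ℂ) (B : Matrix n n ℂ) :
    (∑ a ∈ s, A a) ⊗ₖ B = ∑ a ∈ s, A a ⊗ₖ B := by
  ext ⟨i1,i2⟩ ⟨j1,j2⟩
  simp [Matrix.sum_apply, Finset.sum_mul]

lemma smul_kron {m n : Type*} (c : ℂ) (A : Matrix m m ℂ) (B : Matrix n n ℂ) :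
    (c • A) ⊗ₖ B = c • (A ⊗ₖ B) := by
  ext ⟨i1,i2⟩ ⟨j1,j2⟩
  simp [mul_assoc]

/-- If Alice's measurements are all compatible (jointly measurable), then the bipartite
behavior `p(ab|xy) = tr((M_{a|x} ⊗ N_{b|y}) ρ)` is Bell local. -/
theorem compatible_measurements_imply_local_behavior
    (d : ℕ) (X A Y B : Type) [Fintype X] [Fintype A] [Fintype Y] [Fintype B]
    (M : X → A → Matrix (Fin d) (Fin d) ℂ)
    (N : Y → B → Matrix (Fin d) (Fin d) ℂ)
    (ρ : Matrix (Fin d × Fin d) (Fin d × Fin d) ℂ)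
    (hM : ∀ x a, (M x a).PosSemidef) (hMsum : ∀ x, ∑ a, M x a = 1)
    (hN : ∀ y b, (N y b).PosSemidef) (hNsum : ∀ y, ∑ b, N y b = 1)
    (hρ : ρ.PosSemidef) (hρtr : ρ.trace = 1)
    (hcompat : ∃ (n : ℕ) (E : Fin n → Matrix (Fin d) (Fin d) ℂ)
        (p : X → Fin n → A → ℝ),
      (∀ l, (E l).PosSemidef) ∧ (∑ l, E l) = 1 ∧
      (∀ x l a, 0 ≤ p x l a) ∧ (∀ x l, ∑ a, p x l a = 1) ∧
      (∀ x a, M x a = ∑ l, (p x l a : ℂ) • E l)) :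
    ∃ (n : ℕ) (q : Fin n → ℝ) (pA : X → Fin n → A → ℝ) (pB : Y → Fin n → B → ℝ),
      (∀ l, 0 ≤ q l) ∧ (∑ l, q l = 1) ∧
      (∀ x l a, 0 ≤ pA x l a) ∧ (∀ x l, ∑ a, pA x l a = 1) ∧
      (∀ y l b, 0 ≤ pB y l b) ∧ (∀ y l, ∑ b, pB y l b = 1) ∧
      (∀ a b x y, ((M x a ⊗ₖ N y b) * ρ).trace
        = ∑ l, ((q l * pA x l a * pB y l b : ℝ) : ℂ)) := by
  obtain ⟨n, E, p, hE, hEsum, hp0, hp1, hMdec⟩ := hcompat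
  set t : Fin n → Y → B → ℂ := fun l y b => ((E l ⊗ₖ N y b) * ρ).trace with ht
  set s : Fin n → ℂ := fun l => ((E l ⊗ₖ (1 : Matrix (Fin d) (Fin d) ℂ)) * ρ).trace with hs
  have ht0 : ∀ l y b, 0 ≤ t l y b := fun l y b =>
    psd_trace_mul_nonneg (psd_kron (hE l) (hN y b)) hρ
  have hs0 : ∀ l, 0 ≤ s l := fun l =>
    psd_trace_mul_nonneg (psd_kron (hE l) Matrix.PosSemidef.one) hρ
  have htre : ∀ l y b, (((t l y b).re : ℝ) : ℂ) = t l y b := by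
    intro l y b
    have h2 := (Complex.nonneg_iff.mp (ht0 l y b)).2
    exact Complex.ext rfl (by simpa using h2)
  have hsre : ∀ l, (((s l).re : ℝ) : ℂ) = s l := by
    intro l
    have h2 := (Complex.nonneg_iff.mp (hs0 l)).2
    exact Complex.ext rfl (by simpa using h2)
  have hsum_t : ∀ l y, ∑ b, t l y b = s l := by
    intro l y
    simp only [ht, hs]
    rw [← Matrix.trace_sum, ← Finset.sum_mul, ← kron_sum_right, hNsum]
  have hsum_tre : ∀ l y, ∑ b, (t l y b).re = (s l).re := by
    intro l y
    have := congrArg Complex.re (hsum_t l y)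
    simpa [Complex.re_sum] using this
  have hsum_s : ∑ l, s l = 1 := by
    simp only [hs]
    rw [← Matrix.trace_sum, ← Finset.sum_mul, ← kron_sum_left, hEsum,
      Matrix.one_kronecker_one, Matrix.one_mul, hρtr]
  have hd : Nonempty (Fin d) := by
    rcases Nat.eq_zero_or_pos d with rfl | h
    · exfalso
      rw [Matrix.trace] at hρtr
      simp at hρtr
    · exact ⟨⟨0, h⟩⟩
  have hBne : Y → Nonempty B := by
    intro y
    rcases isEmpty_or_nonempty B with hB | hB
    · exfalso
      obtain ⟨i⟩ := hd
      have h0 : (0 : Matrix (Fin d) (Fin d) ℂ) = 1 := by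
        rw [← hNsum y, Finset.univ_eq_empty, Finset.sum_empty]
      have := congrFun (congrFun h0 i) i
      simp [Matrix.one_apply] at this
    · exact hB
  refine ⟨n, fun l => (s l).re, p,
    fun y l b => if (s l).re = 0 then ((Fintype.card B : ℝ))⁻¹
      else (t l y b).re / (s l).re,
    fun l => (Complex.nonneg_iff.mp (hs0 l)).1, ?_, hp0, hp1, ?_, ?_, ?_⟩
  · have := congrArg Complex.re hsum_s
    simpa [Complex.re_sum] using this
  · intro y l b
    by_cases h : (s l).re = 0
    · simp only [if_pos h]
      positivity
    · simp only [if_neg h]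
      exact div_nonneg (Complex.nonneg_iff.mp (ht0 l y b)).1
        (Complex.nonneg_iff.mp (hs0 l)).1
  · intro y l
    by_cases h : (s l).re = 0
    · simp only [if_pos h, Finset.sum_const, nsmul_eq_mul, Finset.card_univ]
      have : Nonempty B := hBne y
      rw [mul_inv_cancel₀ (Nat.cast_ne_zero.mpr Fintype.card_ne_zero)]
    · simp only [if_neg h]
      rw [← Finset.sum_div, hsum_tre, div_self h]
  · intro a b x y
    have hL : ((M x a ⊗ₖ N y b) * ρ).trace = ∑ l, (p x l a : ℂ) * t l y b := by
      rw [hMdec x a, kron_sum_left]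
      simp_rw [smul_kron]
      rw [Finset.sum_mul, Matrix.trace_sum]
      simp [Matrix.smul_mul, Matrix.trace_smul, smul_eq_mul]
      rfl
    rw [hL]
    apply Finset.sum_congr rfl
    intro l _
    by_cases h : (s l).re = 0
    · have h0 : (t l y b).re = 0 := by
        have hz := (Finset.sum_eq_zero_iff_of_nonneg
          (fun b' _ => (Complex.nonneg_iff.mp (ht0 l y b')).1)).mp
          ((hsum_tre l y).trans h) b (Finset.mem_univ b)
        exact hz
      beta_reduce
      rw [if_pos h, h, ← htre l y b, h0]
      simp
    · have key : (s l).re * p x l a * ((t l y b).re / (s l).re)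
        = p x l a * (t l y b).re := by
        field_simp
      beta_reduce
      rw [if_neg h, key]
      push_cast
      rw [htre l y b]
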